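/- Let Γ be a boundedly n-acyclic group, n ≥ 1. Then for every 1 ≤ i ≤ n, im(δ^{i−1}) is an injective Banach space and a complemented closed subspace of ℓ∞(Γ^i). -/

import Mathlib

set_option synthInstance.maxHeartbeats 1000000
set_option maxHeartbeats 1000000

open scoped ENNReal

universe u v

/-- `ℓ∞(S, V)`: the Banach space of bounded functions `S → V` with the sup norm. -/
noncomputable abbrev ellInfty (S : Type*) (V : Type*) [NormedAddCommGroup V] : Type _ :=
  lp (fun _ : S => V) ∞

/-- A Banach space `X` is *injective* if for every Banach space `W`, every closed subspace
`V ⊆ W` and every bounded linear map `f : V → X`, there is a bounded linear extension of `f`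
to all of `W`. -/
def IsInjectiveBanach (X : Type u) [NormedAddCommGroup X] [NormedSpace ℝ X] : Prop :=
  ∀ (W : Type v) (_ : NormedAddCommGroup W) (_ : NormedSpace ℝ W) (_ : CompleteSpace W)
    (V : Submodule ℝ W), IsClosed (V : Set W) →
      ∀ f : V →L[ℝ] X, ∃ g : W →L[ℝ] X, ∀ v : V, g v = f v
/-- The inhomogeneous coboundary operator of the bounded cochain complex of a group `Γ`
with trivial coefficients in `V` (raw formula on arbitrary functions):
`δⁿ(f)(γ₁,…,γ_{n+1}) = f(γ₂,…,γ_{n+1}) + Σ_{i=1}^n (−1)^i f(γ₁,…,γᵢγ_{i+1},…,γ_{n+1})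
  + (−1)^{n+1} f(γ₁,…,γₙ)` (here written with `0`-indexed tuples). -/
noncomputable def deltaFun (Γ : Type*) [Group Γ] {V : Type*} [AddCommGroup V] [Module ℝ V]
    (n : ℕ) (f : (Fin n → Γ) → V) : (Fin n.succ → Γ) → V :=
  fun γ =>
    f (fun j => γ j.succ)
      + ∑ i : Fin n, ((-1 : ℝ) ^ (i.1 + 1)) •
          f (fun j => if j.1 < i.1 then γ j.castSucc
              else if j.1 = i.1 then γ j.castSucc * γ j.succ else γ j.succ)
      + ((-1 : ℝ) ^ (n + 1)) • f (fun j => γ j.castSucc)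

theorem deltaFun_norm_le (Γ : Type*) [Group Γ] {V : Type*} [NormedAddCommGroup V]
    [NormedSpace ℝ V] (n : ℕ) (f : ellInfty (Fin n → Γ) V) (γ : Fin (n + 1) → Γ) :
    ‖deltaFun Γ n (f : (Fin n → Γ) → V) γ‖ ≤ (n + 2) * ‖f‖ := by
  have hb : ∀ g : Fin n → Γ, ‖(f : (Fin n → Γ) → V) g‖ ≤ ‖f‖ := fun g =>
    lp.norm_apply_le_norm (by norm_num) f g
  have hf0 : (0 : ℝ) ≤ ‖f‖ := norm_nonneg f
  simp only [deltaFun]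
  refine (norm_add₃_le).trans ?_
  have h2 : ‖∑ i : Fin n, ((-1 : ℝ) ^ (i.1 + 1)) •
      (f : (Fin n → Γ) → V) (fun j => if j.1 < i.1 then γ j.castSucc
        else if j.1 = i.1 then γ j.castSucc * γ j.succ else γ j.succ)‖ ≤ n * ‖f‖ := by
    refine (norm_sum_le _ _).trans ?_
    have key : ∀ i : Fin n, ‖((-1 : ℝ) ^ (i.1 + 1)) •
        (f : (Fin n → Γ) → V) (fun j => if j.1 < i.1 then γ j.castSucc
          else if j.1 = i.1 then γ j.castSucc * γ j.succ else γ j.succ)‖ ≤ ‖f‖ := by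
      intro i
      rw [norm_smul]
      have : |(-1 : ℝ) ^ (i.1 + 1)| = 1 := by simp
      rw [Real.norm_eq_abs, this, one_mul]
      exact hb _
    calc ∑ i : Fin n, _ ≤ ∑ _i : Fin n, ‖f‖ := Finset.sum_le_sum (fun i _ => key i)
      _ = n * ‖f‖ := by simp [Finset.sum_const, Finset.card_univ]
  have h3 : ‖((-1 : ℝ) ^ (n + 1)) •
      (f : (Fin n → Γ) → V) (fun j => γ j.castSucc)‖ ≤ ‖f‖ := by
    rw [norm_smul]; simpa using hb _
  nlinarith [hb (fun j => γ j.succ)]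

theorem deltaFun_memℓp (Γ : Type*) [Group Γ] {V : Type*} [NormedAddCommGroup V]
    [NormedSpace ℝ V] (n : ℕ) (f : ellInfty (Fin n → Γ) V) :
    Memℓp (deltaFun Γ n (f : (Fin n → Γ) → V)) ∞ := by
  apply memℓp_infty
  exact ⟨(n + 2) * ‖f‖, by rintro x ⟨γ, rfl⟩; exact deltaFun_norm_le Γ n f γ⟩

/-- The coboundary as a linear map `ℓ∞(Γⁿ, V) → ℓ∞(Γ^{n+1}, V)`. -/
noncomputable def deltaLin (Γ : Type*) [Group Γ] (V : Type*) [NormedAddCommGroup V]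
    [NormedSpace ℝ V] (n : ℕ) :
    ellInfty (Fin n → Γ) V →ₗ[ℝ] ellInfty (Fin (n + 1) → Γ) V where
  toFun f := ⟨deltaFun Γ n (f : (Fin n → Γ) → V), deltaFun_memℓp Γ n f⟩
  map_add' f g := by
    apply lp.ext
    funext γ
    show deltaFun Γ n (⇑f + ⇑g) γ = deltaFun Γ n ⇑f γ + deltaFun Γ n ⇑g γ
    simp only [deltaFun, Pi.add_apply, smul_add, Finset.sum_add_distrib]
    abel
  map_smul' c f := by
    apply lp.ext
    funext γ
    simp [deltaFun, smul_comm c, Finset.smul_sum, smul_add]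

/-- The coboundary as a bounded linear operator `δⁿ : ℓ∞(Γⁿ, V) → ℓ∞(Γ^{n+1}, V)`.
(For `n = 0` this is the map out of `ℓ∞(Γ⁰, V) ≅ V`, which is the zero map `δ⁰`.) -/
noncomputable def deltaL (Γ : Type*) [Group Γ] (V : Type*) [NormedAddCommGroup V]
    [NormedSpace ℝ V] (n : ℕ) :
    ellInfty (Fin n → Γ) V →L[ℝ] ellInfty (Fin (n + 1) → Γ) V :=
  LinearMap.mkContinuous (deltaLin Γ V n) (n + 2) (by
    intro f
    exact lp.norm_le_of_forall_le (by positivity) (fun γ => deltaFun_norm_le Γ n f γ))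

/-- `Γ` is boundedly `n`-acyclic: the bounded cochain complex
`0 → ℝ → ℓ∞(Γ) → ℓ∞(Γ²) → ⋯` with trivial real coefficients is exact in degrees
`1 ≤ i ≤ n`, i.e. `im (δ^{i}) = ker (δ^{i+1})` for all `i` with `i + 1 ≤ n`. -/
def BoundedlyAcyclic (Γ : Type*) [Group Γ] (n : ℕ) : Prop :=
  ∀ i : ℕ, i + 1 ≤ n →
    LinearMap.range (deltaL Γ ℝ i).toLinearMap = LinearMap.ker (deltaL Γ ℝ (i + 1)).toLinearMap


universe w

section AuxLemmas

theorem ellInfty_isInjectiveBanach (S : Type u) :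
    IsInjectiveBanach.{u, w} (ellInfty S ℝ) := by
  intro W _ _ _ V hV f
  have key : ∀ s : S, ∃ g : W →L[ℝ] ℝ,
      (∀ v : V, g v = (f v : S → ℝ) s) ∧ ‖g‖ ≤ ‖f‖ := by
    intro s
    have hb : ∀ v : V, ‖(f v : S → ℝ) s‖ ≤ ‖f‖ * ‖v‖ := fun v =>
      (lp.norm_apply_le_norm ENNReal.top_ne_zero (f v) s).trans (f.le_opNorm v)
    set φ : V →L[ℝ] ℝ := LinearMap.mkContinuous
      { toFun := fun v => (f v : S → ℝ) s
        map_add' := fun x y => by simp [lp.coeFn_add]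
        map_smul' := fun c x => by simp [lp.coeFn_smul] }
      ‖f‖ (fun v => by simpa using hb v) with hφ
    obtain ⟨g, hg, hgn⟩ := exists_extension_norm_eq V φ
    refine ⟨g, fun v => hg v, ?_⟩
    rw [hgn]
    exact LinearMap.mkContinuous_norm_le _ (norm_nonneg f) _
  choose g hg hgn using key
  have hbound : ∀ (x : W) (s : S), ‖g s x‖ ≤ ‖f‖ * ‖x‖ := fun x s =>
    ((g s).le_opNorm x).trans (mul_le_mul_of_nonneg_right (hgn s) (norm_nonneg x))
  have hmem : ∀ x : W, Memℓp (fun s => g s x) (∞ : ℝ≥0∞) := by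
    intro x
    apply memℓp_infty
    refine ⟨‖f‖ * ‖x‖, ?_⟩
    rintro y ⟨s, rfl⟩
    exact hbound x s
  refine ⟨LinearMap.mkContinuous
    { toFun := fun x => (⟨fun s => g s x, hmem x⟩ : ellInfty S ℝ)
      map_add' := fun x y => by
        apply lp.ext; funext s; simp [lp.coeFn_add]; rfl
      map_smul' := fun c x => by
        apply lp.ext; funext s; simp [lp.coeFn_smul] }
    ‖f‖ (fun x => lp.norm_le_of_forall_le
      (mul_nonneg (norm_nonneg f) (norm_nonneg x)) (fun s => hbound x s)), ?_⟩
  intro v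
  apply lp.ext
  funext s
  exact hg s v

theorem IsInjectiveBanach.of_closedComplemented {X : Type u} [NormedAddCommGroup X]
    [NormedSpace ℝ X] (hX : IsInjectiveBanach.{u, w} X) (K : Submodule ℝ X)
    (hK : K.ClosedComplemented) : IsInjectiveBanach.{u, w} K := by
  intro W iW₁ iW₂ iW₃ V hV f
  obtain ⟨P, hP⟩ := hK
  obtain ⟨g, hg⟩ := hX W iW₁ iW₂ iW₃ V hV (K.subtypeL.comp f)
  refine ⟨P.comp g, fun v => ?_⟩
  simp only [ContinuousLinearMap.comp_apply, hg v]
  exact hP (f v)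

theorem IsInjectiveBanach.of_equiv {X : Type u} {Y : Type u'} [NormedAddCommGroup X]
    [NormedSpace ℝ X] [NormedAddCommGroup Y] [NormedSpace ℝ Y]
    (e : X ≃L[ℝ] Y) (hX : IsInjectiveBanach.{u, w} X) : IsInjectiveBanach.{u', w} Y := by
  intro W iW₁ iW₂ iW₃ V hV f
  obtain ⟨g, hg⟩ := hX W iW₁ iW₂ iW₃ V hV ((e.symm : Y →L[ℝ] X).comp f)
  refine ⟨(e : X →L[ℝ] Y).comp g, fun v => ?_⟩
  simp only [ContinuousLinearMap.comp_apply, hg v, ContinuousLinearEquiv.coe_coe,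
    ContinuousLinearEquiv.apply_symm_apply]

theorem range_delta_isInjective_aux (Γ : Type u) [Group Γ] (i : ℕ)
    (hK : (LinearMap.ker (deltaL Γ ℝ i).toLinearMap).ClosedComplemented)
    (hcl : IsClosed ((LinearMap.range (deltaL Γ ℝ i).toLinearMap : Submodule ℝ _) :
        Set (ellInfty (Fin (i + 1) → Γ) ℝ))) :
    IsInjectiveBanach.{u, w} (LinearMap.range (deltaL Γ ℝ i).toLinearMap) := by
  set X := ellInfty (Fin i → Γ) ℝ with hX
  set T := deltaL Γ ℝ i with hT
  obtain ⟨P, hP⟩ := hK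
  set Sm : X →L[ℝ] X := (LinearMap.ker T.toLinearMap).subtypeL.comp P with hSm
  have hSid : ∀ x : X, ∀ hx : x ∈ LinearMap.ker T.toLinearMap, Sm x = x := by
    intro x hx
    have := hP ⟨x, hx⟩
    simpa [hSm] using congrArg Subtype.val this
  have hSmem : ∀ x : X, Sm x ∈ LinearMap.ker T.toLinearMap := fun x => (P x).2
  have hSS : ∀ x : X, Sm (Sm x) = Sm x := fun x => hSid _ (hSmem x)
  set N : Submodule ℝ X := LinearMap.ker Sm.toLinearMap with hN
  have hNcl : IsClosed (N : Set X) := ContinuousLinearMap.isClosed_ker Sm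
  haveI : CompleteSpace N := hNcl.completeSpace_coe
  haveI : CompleteSpace (LinearMap.range T.toLinearMap) := hcl.completeSpace_coe
  have hRmem : ∀ x : X, x - Sm x ∈ N := by
    intro x
    simp only [hN, LinearMap.mem_ker, ContinuousLinearMap.coe_coe, map_sub, hSS x, sub_self]
  set T' : N →L[ℝ] (LinearMap.range T.toLinearMap) :=
    (T.comp N.subtypeL).codRestrict _
      (fun x => LinearMap.mem_range_self T.toLinearMap ((x : X))) with hT'
  have hker : LinearMap.ker T'.toLinearMap = ⊥ := by
    rw [LinearMap.ker_eq_bot']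
    intro m hm
    have h1 : T (m : X) = 0 := by
      have := congrArg Subtype.val hm
      exact this
    have h2 : Sm (m : X) = (m : X) := hSid _ h1
    have h3 : Sm (m : X) = 0 := m.2
    exact Subtype.ext (by rw [← h2, h3]; simp)
  have hrange : LinearMap.range T'.toLinearMap = ⊤ := by
    rw [LinearMap.range_eq_top]
    rintro ⟨y, x, rfl⟩
    refine ⟨⟨x - Sm x, hRmem x⟩, ?_⟩
    apply Subtype.ext
    have hTS : T (Sm x) = 0 := hSmem x
    simp [hT', ContinuousLinearMap.coe_codRestrict_apply, map_sub, hTS]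
    show T (x - Sm x) = T x
    rw [map_sub, hTS, sub_zero]
  set e : N ≃L[ℝ] (LinearMap.range T.toLinearMap) := ContinuousLinearEquiv.ofBijective T' hker hrange
  have hNcc : N.ClosedComplemented := by
    refine ⟨(ContinuousLinearMap.id ℝ X - Sm).codRestrict N
      (fun x => by simpa using hRmem x), ?_⟩
    intro x
    apply Subtype.ext
    have hx0 : Sm (x : X) = 0 := x.2
    simp [ContinuousLinearMap.coe_codRestrict_apply, hx0]
  have hNinj : IsInjectiveBanach.{u, w} N :=
    (ellInfty_isInjectiveBanach (Fin i → Γ)).of_closedComplemented N hNcc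
  exact hNinj.of_equiv e

end AuxLemmas

/-- Let `Γ` be a boundedly `n`-acyclic group, `n ≥ 1`. Then for every degree
`1 ≤ i+1 ≤ n`, the image of `δ^i` is an injective Banach space and a complemented closed
subspace of `ℓ∞(Γ^{i+1})`. -/
theorem range_delta_injective_and_complemented (Γ : Type*) [Group Γ] (n : ℕ) (hn : 1 ≤ n)
    (h : BoundedlyAcyclic Γ n) :
    ∀ i : ℕ, i + 1 ≤ n →
      IsClosed ((LinearMap.range (deltaL Γ ℝ i).toLinearMap : Submodule ℝ _) :
          Set (ellInfty (Fin (i + 1) → Γ) ℝ)) ∧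
        IsInjectiveBanach (LinearMap.range (deltaL Γ ℝ i).toLinearMap) ∧
        (LinearMap.range (deltaL Γ ℝ i).toLinearMap).ClosedComplemented := by
  have hzero : LinearMap.ker (deltaL Γ ℝ 0).toLinearMap = ⊤ := by
    rw [eq_top_iff]
    intro f _
    simp only [LinearMap.mem_ker, ContinuousLinearMap.coe_coe]
    apply lp.ext
    funext γ
    have hfun : (fun j : Fin 0 => γ j.succ) = (fun j : Fin 0 => γ j.castSucc) :=
      funext fun j => j.elim0
    simp [deltaL, deltaLin, LinearMap.mkContinuous_apply, deltaFun, hfun]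
  have hC : ∀ i : ℕ, i ≤ n → (LinearMap.ker (deltaL Γ ℝ i).toLinearMap).ClosedComplemented := by
    intro i
    induction i with
    | zero =>
      intro _
      rw [hzero]
      exact Submodule.closedComplemented_top
    | succ i ih =>
      intro hi
      have hacy := h i hi
      have hcl : IsClosed ((LinearMap.range (deltaL Γ ℝ i).toLinearMap : Submodule ℝ _) :
          Set (ellInfty (Fin (i + 1) → Γ) ℝ)) := by
        rw [hacy]
        exact ContinuousLinearMap.isClosed_ker (deltaL Γ ℝ (i + 1))
      have hinj := range_delta_isInjective_aux Γ i (ih (Nat.le_of_succ_le hi)) hcl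
      obtain ⟨P, hP⟩ := hinj (ellInfty (Fin (i + 1) → Γ) ℝ) inferInstance inferInstance
        inferInstance (LinearMap.range (deltaL Γ ℝ i).toLinearMap) hcl
        (ContinuousLinearMap.id ℝ (LinearMap.range (deltaL Γ ℝ i).toLinearMap))
      rw [← hacy]
      exact ⟨P, fun x => by simpa using hP x⟩
  intro i hi
  have hacy := h i hi
  have hcl : IsClosed ((LinearMap.range (deltaL Γ ℝ i).toLinearMap : Submodule ℝ _) :
      Set (ellInfty (Fin (i + 1) → Γ) ℝ)) := by
    rw [hacy]
    exact ContinuousLinearMap.isClosed_ker (deltaL Γ ℝ (i + 1))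
  have hCi := hC i (Nat.le_of_succ_le hi)
  refine ⟨hcl, range_delta_isInjective_aux Γ i hCi hcl, ?_⟩
  have hinj := range_delta_isInjective_aux Γ i hCi hcl
  obtain ⟨P, hP⟩ := hinj (ellInfty (Fin (i + 1) → Γ) ℝ) inferInstance inferInstance
    inferInstance (LinearMap.range (deltaL Γ ℝ i).toLinearMap) hcl
    (ContinuousLinearMap.id ℝ (LinearMap.range (deltaL Γ ℝ i).toLinearMap))
  exact ⟨P, fun x => by simpa using hP x⟩
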